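/- arXiv:2504.08435 — 2 statements merged into one kernel-verified Lean document; each statement's English description precedes it below -/
import Mathlib

section
/- Let X be a real random variable with mean μ, and suppose E|X - μ|^m = σ_m^m < ∞ for some m ≥ 2. Let 0 < ε < 1/2 and let α = Q_{ε}(X), β = Q_{1-ε}(X) be the ε and (1-ε) quantiles of X. Then |E φ_{α,β}(X) - μ| ≤ 4 σ_m ε^{1 - 1/m}, where φ_{α,β}(x) = max(α, min(x, β)). -/
open MeasureTheory Real

lemma young_aux {a t m : ℝ} (ha : 0 ≤ a) (ht : 0 < t) (hm : 2 ≤ m) :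
    a ≤ (m * t ^ (m - 1))⁻¹ * a ^ m + t * (m - 1) / m := by
  have hm1 : (1:ℝ) < m := by linarith
  have hm0 : (0:ℝ) < m := by linarith
  have hpq : m.HolderConjugate (m / (m - 1)) := Real.HolderConjugate.conjExponent hm1
  set u : ℝ := t ^ ((m - 1) / m) with hu
  have hupos : 0 < u := rpow_pos_of_pos ht _
  have key := Real.young_inequality_of_nonneg (div_nonneg ha hupos.le) hupos.le hpq
  have h1 : a / u * u = a := div_mul_cancel₀ a hupos.ne'
  have h2 : (a / u) ^ m = a ^ m / t ^ (m - 1) := by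
    rw [Real.div_rpow ha hupos.le, hu, ← Real.rpow_mul ht.le]
    congr 1
    field_simp
  have h3 : u ^ (m / (m - 1)) = t := by
    rw [hu, ← Real.rpow_mul ht.le]
    have he : (m - 1) / m * (m / (m - 1)) = 1 := by
      rw [div_mul_div_comm, mul_comm, div_self (by nlinarith : m * (m - 1) ≠ 0)]
    rw [he, Real.rpow_one]
  rw [h1, h2, h3] at key
  have htm : 0 < t ^ (m - 1) := rpow_pos_of_pos ht _
  calc a ≤ a ^ m / t ^ (m - 1) / m + t / (m / (m - 1)) := key
    _ = (m * t ^ (m - 1))⁻¹ * a ^ m + t * (m - 1) / m := by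
        field_simp

set_option maxHeartbeats 1000000 in
lemma stmt_4_aux {Ω : Type*} [MeasurableSpace Ω] (P : Measure Ω) [IsProbabilityMeasure P]
    (X : Ω → ℝ) (μ m σm ε : ℝ) (hm : 2 ≤ m) (hσ : 0 ≤ σm)
    (hXm : Measurable X)
    (hX : Integrable X P) (hmean : ∫ ω, X ω ∂P = μ)
    (hmomInt : Integrable (fun ω => |X ω - μ| ^ m) P)
    (hmom : ∫ ω, |X ω - μ| ^ m ∂P = σm ^ m)
    (hε0 : 0 < ε) (hε1 : ε < 1 / 2)
    (α β : ℝ)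
    (hα : α = sInf {z : ℝ | ε ≤ (P {ω | X ω ≤ z}).toReal})
    (hβ : β = sInf {z : ℝ | 1 - ε ≤ (P {ω | X ω ≤ z}).toReal}) :
    |(∫ ω, max α (min (X ω) β) ∂P) - μ| ≤ 4 * σm * ε ^ (1 - 1 / m) := by
  have hm0 : (0:ℝ) < m := by linarith
  rcases eq_or_lt_of_le hσ with hσ0 | hσpos
  · -- degenerate case: σm = 0, X = μ a.e.
    have hσ0 : σm = 0 := hσ0.symm
    subst hσ0
    have hzero : ∫ ω, |X ω - μ| ^ m ∂P = 0 := by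
      rw [hmom, Real.zero_rpow hm0.ne']
    have hae : ∀ᵐ ω ∂P, X ω = μ := by
      have hnn : 0 ≤ᵐ[P] fun ω => |X ω - μ| ^ m :=
        Filter.Eventually.of_forall fun ω => rpow_nonneg (abs_nonneg _) _
      have := (integral_eq_zero_iff_of_nonneg_ae hnn hmomInt).1 hzero
      filter_upwards [this] with ω hω
      have : |X ω - μ| ^ m = 0 := hω
      have habs : |X ω - μ| = 0 :=
        (Real.rpow_eq_zero (abs_nonneg _) hm0.ne').1 this
      have := abs_eq_zero.1 habs
      linarith
    have hμmem : ∀ z, μ ≤ z → (P {ω | X ω ≤ z}).toReal = 1 := by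
      intro z hz
      have : {ω | X ω ≤ z} =ᵐ[P] (Set.univ : Set Ω) := by
        filter_upwards [hae] with ω hω
        show (X ω ≤ z) = True
        simp [hω, hz]
      rw [measure_congr this, measure_univ, ENNReal.toReal_one]
    have hμnot : ∀ z, z < μ → (P {ω | X ω ≤ z}).toReal = 0 := by
      intro z hz
      have : {ω | X ω ≤ z} =ᵐ[P] (∅ : Set Ω) := by
        filter_upwards [hae] with ω hω
        show (X ω ≤ z) = False
        simp only [eq_iff_iff, iff_false, not_le, hω]
        exact hz
      rw [measure_congr this, measure_empty, ENNReal.toReal_zero]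
    have hSet : ∀ c : ℝ, 0 < c → c ≤ 1 →
        {z : ℝ | c ≤ (P {ω | X ω ≤ z}).toReal} = Set.Ici μ := by
      intro c hc0 hc1
      ext z
      simp only [Set.mem_setOf_eq, Set.mem_Ici]
      constructor
      · intro h
        by_contra hz
        rw [hμnot z (not_le.1 hz)] at h
        linarith
      · intro h
        rw [hμmem z h]
        exact hc1
    have hαμ : α = μ := by rw [hα, hSet ε hε0 (by linarith), csInf_Ici]
    have hβμ : β = μ := by
      rw [hβ, hSet (1 - ε) (by linarith) (by linarith), csInf_Ici]
    rw [hαμ, hβμ]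
    have hint : ∫ ω, max μ (min (X ω) μ) ∂P = μ := by
      have : (fun ω => max μ (min (X ω) μ)) =ᵐ[P] fun _ => μ := by
        filter_upwards [hae] with ω hω
        simp [hω]
      rw [integral_congr_ae this, integral_const, probReal_univ]
      simp
    rw [hint]
    simp
  · -- main case: σm > 0
    set t : ℝ := σm * ε ^ (-(1/m)) with htdef
    have ht : 0 < t := mul_pos hσpos (Real.rpow_pos_of_pos hε0 _)
    have hσm : 0 < σm ^ m := Real.rpow_pos_of_pos hσpos m
    have htm : t ^ m = σm ^ m / ε := by
      rw [htdef, Real.mul_rpow hσ (Real.rpow_pos_of_pos hε0 _).le, ← Real.rpow_mul hε0.le]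
      rw [show -(1/m) * m = -1 by field_simp, Real.rpow_neg_one, div_eq_mul_inv]
    have hεt : σm ^ m / t ^ m = ε := by
      rw [htm]
      field_simp
    -- Markov's inequality
    have mark : ∀ s : ℝ, 0 < s → (P {ω | s ≤ |X ω - μ|}).toReal ≤ σm ^ m / s ^ m := by
      intro s hs
      have hnn : 0 ≤ᵐ[P] fun ω => |X ω - μ| ^ m :=
        Filter.Eventually.of_forall fun ω => Real.rpow_nonneg (abs_nonneg _) _
      have h := mul_meas_ge_le_integral_of_nonneg hnn hmomInt (s ^ m)
      rw [hmom] at h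
      have hsub : {ω | s ≤ |X ω - μ|} ⊆ {ω | s ^ m ≤ |X ω - μ| ^ m} := fun ω hω =>
        Real.rpow_le_rpow hs.le hω hm0.le
      have hmono : (P {ω | s ≤ |X ω - μ|}).toReal ≤ (P {ω | s ^ m ≤ |X ω - μ| ^ m}).toReal :=
        ENNReal.toReal_mono (measure_ne_top _ _) (measure_mono hsub)
      have hsm : 0 < s ^ m := Real.rpow_pos_of_pos hs m
      refine hmono.trans ?_
      rw [le_div_iff₀ hsm, mul_comm]
      exact h
    have hcompl : ∀ z : ℝ, (P {ω | X ω ≤ z}).toReal + (P {ω | z < X ω}).toReal = 1 := by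
      intro z
      have hms : MeasurableSet {ω | X ω ≤ z} := hXm measurableSet_Iic
      have h := measure_add_measure_compl (μ := P) hms
      rw [measure_univ] at h
      have hne : {ω | X ω ≤ z}ᶜ = {ω | z < X ω} := by ext ω; simp [not_le]
      rw [hne] at h
      have := congrArg ENNReal.toReal h
      rwa [ENNReal.toReal_add (measure_ne_top _ _) (measure_ne_top _ _), ENNReal.toReal_one] at this
    have hup : 1 - ε ≤ (P {ω | X ω ≤ μ + t}).toReal := by
      have hsub : {ω | μ + t < X ω} ⊆ {ω | t ≤ |X ω - μ|} := fun ω hω => by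
        have h1 : μ + t < X ω := hω
        have h2 : t ≤ X ω - μ := by linarith
        exact h2.trans (le_abs_self _)
      have h1 : (P {ω | μ + t < X ω}).toReal ≤ ε :=
        calc (P {ω | μ + t < X ω}).toReal
            ≤ (P {ω | t ≤ |X ω - μ|}).toReal :=
              ENNReal.toReal_mono (measure_ne_top _ _) (measure_mono hsub)
          _ ≤ σm ^ m / t ^ m := mark t ht
          _ = ε := hεt
      linarith [hcompl (μ + t)]
    set S := {z : ℝ | ε ≤ (P {ω | X ω ≤ z}).toReal} with hSdef
    set S' := {z : ℝ | 1 - ε ≤ (P {ω | X ω ≤ z}).toReal} with hS'def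
    have hS'S : S' ⊆ S := by
      intro z hz
      have hz' : 1 - ε ≤ (P {ω | X ω ≤ z}).toReal := hz
      show ε ≤ (P {ω | X ω ≤ z}).toReal
      linarith
    have hmemS' : μ + t ∈ S' := hup
    have hmemS : μ + t ∈ S := hS'S hmemS'
    have hlow : ∀ z ∈ S, μ - t ≤ z := by
      intro z hz
      by_contra hcon
      push_neg at hcon
      have h1 : {ω | X ω ≤ z} ⊆ {ω | μ - z ≤ |X ω - μ|} := fun ω hω => by
        have hxz : X ω ≤ z := hω
        have h2 : μ - z ≤ -(X ω - μ) := by linarith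
        exact h2.trans (neg_le_abs _)
      have h2 : (P {ω | X ω ≤ z}).toReal ≤ σm ^ m / (μ - z) ^ m :=
        le_trans (ENNReal.toReal_mono (measure_ne_top _ _) (measure_mono h1))
          (mark _ (by linarith))
      have h3 : σm ^ m / (μ - z) ^ m < σm ^ m / t ^ m := by
        apply div_lt_div_of_pos_left hσm (Real.rpow_pos_of_pos ht m)
        exact Real.rpow_lt_rpow ht.le (by linarith) hm0
      have hz' : ε ≤ (P {ω | X ω ≤ z}).toReal := hz
      rw [hεt] at h3
      linarith
    have hbdd : BddBelow S := ⟨μ - t, hlow⟩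
    have hSne : S.Nonempty := ⟨μ + t, hmemS⟩
    have hS'ne : S'.Nonempty := ⟨μ + t, hmemS'⟩
    have hαβ : α ≤ β := by rw [hα, hβ]; exact csInf_le_csInf hbdd hS'ne hS'S
    have hαub : α ≤ μ + t := by rw [hα]; exact csInf_le hbdd hmemS
    have hβlb : μ - t ≤ β := by rw [hβ]; exact le_csInf hS'ne fun z hz => hlow z (hS'S hz)
    -- tail probability bounds
    have hPA : (P {ω | X ω < α}).toReal ≤ ε := by
      have hun : {ω | X ω < α} = ⋃ n : ℕ, {ω | X ω ≤ α - 1 / (n + 1)} := by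
        ext ω
        simp only [Set.mem_setOf_eq, Set.mem_iUnion]
        constructor
        · intro h
          obtain ⟨n, hn⟩ := exists_nat_one_div_lt (show (0:ℝ) < α - X ω by linarith)
          exact ⟨n, by linarith⟩
        · rintro ⟨n, hn⟩
          have hpos : 0 < 1 / ((n:ℝ) + 1) := by positivity
          linarith
      have hmon : Monotone fun n : ℕ => {ω | X ω ≤ α - 1 / ((n:ℝ) + 1)} := by
        intro a b hab ω hω
        simp only [Set.mem_setOf_eq] at hω ⊢
        have hc : ((a:ℝ) + 1) ≤ ((b:ℝ) + 1) := by
          have := (Nat.cast_le (α := ℝ)).2 hab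
          linarith
        have : 1 / ((b:ℝ) + 1) ≤ 1 / ((a:ℝ) + 1) :=
          one_div_le_one_div_of_le (by positivity) hc
        linarith
      rw [hun, hmon.measure_iUnion]
      refine ENNReal.toReal_le_of_le_ofReal hε0.le (iSup_le fun n => ?_)
      have hzn : α - 1 / ((n:ℝ) + 1) ∉ S := by
        apply notMem_of_lt_csInf _ hbdd
        rw [← hα]
        have hpos : 0 < 1 / ((n:ℝ) + 1) := by positivity
        linarith
      have hlt : (P {ω | X ω ≤ α - 1 / ((n:ℝ) + 1)}).toReal ≤ ε := by
        by_contra hcon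
        push_neg at hcon
        exact hzn hcon.le
      exact (ENNReal.le_ofReal_iff_toReal_le (measure_ne_top _ _) hε0.le).2 hlt
    have hS'up : ∀ z : ℝ, β < z → 1 - ε ≤ (P {ω | X ω ≤ z}).toReal := by
      intro z hz
      obtain ⟨s, hsS', hsz⟩ := exists_lt_of_csInf_lt hS'ne (show sInf S' < z by rw [← hβ]; exact hz)
      have hsub : {ω | X ω ≤ s} ⊆ {ω | X ω ≤ z} := fun ω hω => le_trans hω hsz.le
      exact le_trans hsS' (ENNReal.toReal_mono (measure_ne_top _ _) (measure_mono hsub))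
    have hPB : (P {ω | β < X ω}).toReal ≤ ε := by
      have hun : {ω | β < X ω} = ⋃ n : ℕ, {ω | β + 1 / (n + 1) < X ω} := by
        ext ω
        simp only [Set.mem_setOf_eq, Set.mem_iUnion]
        constructor
        · intro h
          obtain ⟨n, hn⟩ := exists_nat_one_div_lt (show (0:ℝ) < X ω - β by linarith)
          exact ⟨n, by linarith⟩
        · rintro ⟨n, hn⟩
          have hpos : 0 < 1 / ((n:ℝ) + 1) := by positivity
          linarith
      have hmon : Monotone fun n : ℕ => {ω | β + 1 / ((n:ℝ) + 1) < X ω} := by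
        intro a b hab ω hω
        simp only [Set.mem_setOf_eq] at hω ⊢
        have hc : ((a:ℝ) + 1) ≤ ((b:ℝ) + 1) := by
          have := (Nat.cast_le (α := ℝ)).2 hab
          linarith
        have : 1 / ((b:ℝ) + 1) ≤ 1 / ((a:ℝ) + 1) :=
          one_div_le_one_div_of_le (by positivity) hc
        linarith
      rw [hun, hmon.measure_iUnion]
      refine ENNReal.toReal_le_of_le_ofReal hε0.le (iSup_le fun n => ?_)
      have hpos : 0 < 1 / ((n:ℝ) + 1) := by positivity
      have h1 := hS'up (β + 1 / ((n:ℝ) + 1)) (by linarith)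
      have h2 := hcompl (β + 1 / ((n:ℝ) + 1))
      have hlt : (P {ω | β + 1 / ((n:ℝ) + 1) < X ω}).toReal ≤ ε := by linarith
      exact (ENNReal.le_ofReal_iff_toReal_le (measure_ne_top _ _) hε0.le).2 hlt
    -- pointwise bound
    set c : ℝ := t * (2 - 1/m) with hcdef
    set k : ℝ := (m * t ^ (m-1))⁻¹ with hkdef
    have hc0 : 0 ≤ c := by
      have h1 : 1/m ≤ 1 := by rw [div_le_one hm0]; linarith
      nlinarith [ht.le]
    have hk0 : 0 ≤ k := by
      rw [hkdef]
      have := Real.rpow_pos_of_pos ht (m - 1)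
      positivity
    set Sset := {ω | X ω < α} ∪ {ω | β < X ω} with hSsetdef
    have hSmeas : MeasurableSet Sset :=
      (measurableSet_lt hXm measurable_const).union (measurableSet_lt measurable_const hXm)
    have hyoung : ∀ x : ℝ, t + |x - μ| ≤ c + k * |x - μ| ^ m := by
      intro x
      have h := young_aux (abs_nonneg (x - μ)) ht hm
      have hid : t + t * (m - 1) / m = c := by
        rw [hcdef]
        field_simp
        ring
      rw [← hkdef] at h
      linarith
    have hpt : ∀ ω, |max α (min (X ω) β) - X ω| ≤
        Sset.indicator (fun _ => c) ω + k * |X ω - μ| ^ m := by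
      intro ω
      have hknn : 0 ≤ k * |X ω - μ| ^ m := mul_nonneg hk0 (Real.rpow_nonneg (abs_nonneg _) _)
      rcases lt_or_ge (X ω) α with h1 | h1
      · have hmem : ω ∈ Sset := Or.inl h1
        rw [Set.indicator_of_mem hmem]
        have hval : max α (min (X ω) β) = α := by
          rw [min_eq_left (h1.le.trans hαβ), max_eq_left h1.le]
        rw [hval, abs_of_nonneg (by linarith)]
        have h2 : μ - X ω ≤ |X ω - μ| := by rw [abs_sub_comm]; exact le_abs_self _
        have h3 : α - X ω ≤ t + |X ω - μ| := by linarith [hαub]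
        linarith [hyoung (X ω)]
      rcases le_or_gt (X ω) β with h2 | h2
      · have hval : max α (min (X ω) β) = X ω := by rw [min_eq_left h2, max_eq_right h1]
        rw [hval, sub_self, abs_zero]
        exact add_nonneg (Set.indicator_nonneg (fun _ _ => hc0) ω) hknn
      · have hmem : ω ∈ Sset := Or.inr h2
        rw [Set.indicator_of_mem hmem]
        have hval : max α (min (X ω) β) = β := by rw [min_eq_right h2.le, max_eq_right hαβ]
        rw [hval, abs_of_nonpos (by linarith), neg_sub]
        have h3 : X ω - μ ≤ |X ω - μ| := le_abs_self _
        have h4 : X ω - β ≤ t + |X ω - μ| := by linarith [hβlb]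
        linarith [hyoung (X ω)]
    -- integrability
    have hInd : Integrable (Sset.indicator fun _ => c) P := (integrable_const c).indicator hSmeas
    have hkInt : Integrable (fun ω => k * |X ω - μ| ^ m) P := hmomInt.const_mul k
    have hRHS : Integrable (fun ω => Sset.indicator (fun _ => c) ω + k * |X ω - μ| ^ m) P :=
      hInd.add hkInt
    have hg : Integrable (fun ω => max α (min (X ω) β)) P := by
      refine Integrable.mono' (integrable_const (max |α| |β|))
        ((measurable_const.max (hXm.min measurable_const)).aestronglyMeasurable) ?_
      refine Filter.Eventually.of_forall fun ω => ?_
      rw [Real.norm_eq_abs, abs_le]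
      constructor
      · have : -(max |α| |β|) ≤ α := by
          have := neg_abs_le α
          have := le_max_left |α| |β|
          linarith
        exact this.trans (le_max_left _ _)
      · have h1 : max α (min (X ω) β) ≤ β := max_le hαβ (min_le_right _ _)
        have h2 : β ≤ max |α| |β| := (le_abs_self β).trans (le_max_right _ _)
        linarith
    have habs_sub : Integrable (fun ω => |max α (min (X ω) β) - X ω|) P := (hg.sub hX).abs
    have key : |(∫ ω, max α (min (X ω) β) ∂P) - μ| ≤ c * (P Sset).toReal + k * σm ^ m := by
      have h1 : (∫ ω, max α (min (X ω) β) ∂P) - μ = ∫ ω, (max α (min (X ω) β) - X ω) ∂P := by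
        rw [integral_sub hg hX, hmean]
      rw [h1]
      calc |∫ ω, (max α (min (X ω) β) - X ω) ∂P|
          ≤ ∫ ω, |max α (min (X ω) β) - X ω| ∂P := by
            simpa [Real.norm_eq_abs] using
              norm_integral_le_integral_norm (μ := P) (fun ω => max α (min (X ω) β) - X ω)
        _ ≤ ∫ ω, (Sset.indicator (fun _ => c) ω + k * |X ω - μ| ^ m) ∂P :=
            integral_mono habs_sub hRHS hpt
        _ = c * (P Sset).toReal + k * σm ^ m := by
            rw [integral_add hInd hkInt, integral_indicator_const c hSmeas, measureReal_def,
              integral_const_mul, hmom, smul_eq_mul, mul_comm]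
    have hPS : (P Sset).toReal ≤ 2 * ε := by
      have h1 : P Sset ≤ P {ω | X ω < α} + P {ω | β < X ω} := measure_union_le _ _
      have h2 := ENNReal.toReal_mono
        (ENNReal.add_ne_top.2 ⟨measure_ne_top _ _, measure_ne_top _ _⟩) h1
      rw [ENNReal.toReal_add (measure_ne_top _ _) (measure_ne_top _ _)] at h2
      linarith
    -- arithmetic
    have hE1 : t * ε = σm * ε ^ (1 - 1/m) := by
      rw [htdef, mul_assoc]
      congr 1
      rw [show (1 - 1/m : ℝ) = -(1/m) + 1 by ring, Real.rpow_add hε0, Real.rpow_one]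
    have ht1 : t ^ (m - 1) = σm ^ (m-1) * ε ^ (-(1/m) * (m-1)) := by
      rw [htdef, Real.mul_rpow hσ (Real.rpow_nonneg hε0.le _), ← Real.rpow_mul hε0.le]
    have hprod : t ^ (m-1) * (σm * ε ^ (1 - 1/m)) = σm ^ m := by
      rw [ht1]
      have hs1 : σm ^ (m-1) * σm = σm ^ m := by
        rw [show σm ^ m = σm ^ ((m-1) + 1) by ring_nf, Real.rpow_add hσpos, Real.rpow_one]
      have hs2 : ε ^ (-(1/m) * (m-1)) * ε ^ (1 - 1/m) = 1 := by
        rw [← Real.rpow_add hε0, show -(1/m) * (m-1) + (1 - 1/m) = 0 by field_simp; ring,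
          Real.rpow_zero]
      calc σm ^ (m-1) * ε ^ (-(1/m) * (m-1)) * (σm * ε ^ (1 - 1/m))
          = (σm ^ (m-1) * σm) * (ε ^ (-(1/m) * (m-1)) * ε ^ (1 - 1/m)) := by ring
        _ = σm ^ m := by rw [hs1, hs2, mul_one]
    have hE2 : k * σm ^ m = (1/m) * (σm * ε ^ (1 - 1/m)) := by
      have htm1 : t ^ (m-1) ≠ 0 := (Real.rpow_pos_of_pos ht _).ne'
      rw [hkdef, ← hprod]
      calc (m * t ^ (m-1))⁻¹ * (t ^ (m-1) * (σm * ε ^ (1 - 1/m)))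
          = ((t ^ (m-1))⁻¹ * t ^ (m-1)) * (m⁻¹ * (σm * ε ^ (1 - 1/m))) := by
            rw [mul_inv]; ring
        _ = (1/m) * (σm * ε ^ (1 - 1/m)) := by
            rw [inv_mul_cancel₀ htm1, one_mul, one_div]
    have hE0 : 0 ≤ σm * ε ^ (1 - 1/m) := mul_nonneg hσ (Real.rpow_nonneg hε0.le _)
    have hfin : c * (P Sset).toReal + k * σm ^ m ≤ 4 * σm * ε ^ (1 - 1/m) := by
      have h1 : c * (P Sset).toReal ≤ c * (2 * ε) := by nlinarith
      have h2 : c * (2 * ε) = (2 * (2 - 1/m)) * (σm * ε ^ (1 - 1/m)) := by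
        rw [hcdef]
        calc t * (2 - 1/m) * (2 * ε) = (2 * (2 - 1/m)) * (t * ε) := by ring
          _ = (2 * (2 - 1/m)) * (σm * ε ^ (1 - 1/m)) := by rw [hE1]
      have h3 : 0 < 1/m := by positivity
      have h4 : 1/m ≤ 1 := by rw [div_le_one hm0]; linarith
      rw [hE2]
      nlinarith [hE0]
    exact key.trans hfin

theorem stmt_4 {Ω : Type*} [MeasurableSpace Ω] (P : Measure Ω) [IsProbabilityMeasure P]
    (X : Ω → ℝ) (μ m σm ε : ℝ) (hm : 2 ≤ m) (hσ : 0 ≤ σm)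
    (hX : Integrable X P) (hmean : ∫ ω, X ω ∂P = μ)
    (hmomInt : Integrable (fun ω => |X ω - μ| ^ m) P)
    (hmom : ∫ ω, |X ω - μ| ^ m ∂P = σm ^ m)
    (hε0 : 0 < ε) (hε1 : ε < 1 / 2)
    (α β : ℝ)
    (hα : α = sInf {z : ℝ | ε ≤ (P {ω | X ω ≤ z}).toReal})
    (hβ : β = sInf {z : ℝ | 1 - ε ≤ (P {ω | X ω ≤ z}).toReal}) :
    |(∫ ω, max α (min (X ω) β) ∂P) - μ| ≤ 4 * σm * ε ^ (1 - 1 / m) := by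
  set Y : Ω → ℝ := hX.1.aemeasurable.mk X with hYdef
  have hYm : Measurable Y := hX.1.aemeasurable.measurable_mk
  have hxy : X =ᵐ[P] Y := hX.1.aemeasurable.ae_eq_mk
  have hsets : ∀ z : ℝ, P {ω | X ω ≤ z} = P {ω | Y ω ≤ z} := by
    intro z
    apply measure_congr
    filter_upwards [hxy] with ω hω
    show (X ω ≤ z) = (Y ω ≤ z)
    rw [hω]
  have hXY : Integrable Y P := hX.congr hxy
  have hmeanY : ∫ ω, Y ω ∂P = μ := by rw [← integral_congr_ae hxy, hmean]
  have hmomIntY : Integrable (fun ω => |Y ω - μ| ^ m) P := by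
    refine hmomInt.congr ?_
    filter_upwards [hxy] with ω hω
    rw [hω]
  have hmomY : ∫ ω, |Y ω - μ| ^ m ∂P = σm ^ m := by
    rw [← hmom]
    apply integral_congr_ae
    filter_upwards [hxy] with ω hω
    rw [hω]
  have hαY : α = sInf {z : ℝ | ε ≤ (P {ω | Y ω ≤ z}).toReal} := by
    rw [hα]
    congr 1
    ext z
    rw [Set.mem_setOf_eq, Set.mem_setOf_eq, hsets z]
  have hβY : β = sInf {z : ℝ | 1 - ε ≤ (P {ω | Y ω ≤ z}).toReal} := by
    rw [hβ]
    congr 1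
    ext z
    rw [Set.mem_setOf_eq, Set.mem_setOf_eq, hsets z]
  have hint : ∫ ω, max α (min (X ω) β) ∂P = ∫ ω, max α (min (Y ω) β) ∂P := by
    apply integral_congr_ae
    filter_upwards [hxy] with ω hω
    rw [hω]
  rw [hint]
  exact stmt_4_aux P Y μ m σm ε hm hσ hYm hXY hmeanY hmomIntY hmomY hε0 hε1 α β hαY hβY
end

section
/- Let X be a real random variable with mean μ and E|X - μ|^m = σ_m^m < ∞ for m > 2. Let 0 < ε < 1/2, α = Q_ε(X), β = Q_{1-ε}(X). Then E[(α - X)² · 1{X < α}] ≤ (E|μ - X + σ_m/(1-ε)^{1/m}|^m)^{2/m} · ε^{1-2/m}, where Q_p denotes the p-quantile. -/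
open MeasureTheory Real ENNReal

private lemma two_rpow_bound (a b m : ℝ) (ha : 0 ≤ a) (hb : 0 ≤ b) (hm : 0 ≤ m) :
    (a + b) ^ m ≤ 2 ^ m * (a ^ m + b ^ m) := by
  have h1 : a + b ≤ 2 * max a b := by
    rcases le_total a b with h | h
    · simp [max_eq_right h]; linarith
    · simp [max_eq_left h]; linarith
  calc (a + b) ^ m ≤ (2 * max a b) ^ m := Real.rpow_le_rpow (by linarith) h1 hm
    _ = 2 ^ m * (max a b) ^ m := Real.mul_rpow (by norm_num) (le_max_of_le_left ha)
    _ ≤ 2 ^ m * (a ^ m + b ^ m) := by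
        gcongr
        rcases le_total a b with h | h
        · rw [max_eq_right h]; nlinarith [Real.rpow_nonneg ha m]
        · rw [max_eq_left h]; nlinarith [Real.rpow_nonneg hb m]

set_option maxHeartbeats 1000000 in
theorem stmt_5 {Ω : Type*} [MeasurableSpace Ω] (P : Measure Ω) [IsProbabilityMeasure P]
    (X : Ω → ℝ) (μ m σm ε : ℝ) (hm : 2 < m) (hσ : 0 ≤ σm)
    (hX : Integrable X P) (hmean : ∫ ω, X ω ∂P = μ)
    (hmomInt : Integrable (fun ω => |X ω - μ| ^ m) P)
    (hmom : ∫ ω, |X ω - μ| ^ m ∂P = σm ^ m)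
    (hε0 : 0 < ε) (hε1 : ε < 1 / 2)
    (α : ℝ) (hα : α = sInf {z : ℝ | ε ≤ (P {ω | X ω ≤ z}).toReal}) :
    ∫ ω, Set.indicator {ω | X ω < α} (fun ω => (α - X ω) ^ 2) ω ∂P ≤
      (∫ ω, |μ - X ω + σm / (1 - ε) ^ (1 / m)| ^ m ∂P) ^ (2 / m) * ε ^ (1 - 2 / m) := by
  have hm0 : (0:ℝ) < m := by linarith
  have hε1' : (0:ℝ) < 1 - ε := by linarith
  set c : ℝ := σm / (1 - ε) ^ (1 / m) with hcdef
  have hbase : (0:ℝ) < (1 - ε) ^ (1 / m) := Real.rpow_pos_of_pos hε1' _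
  have hc0 : 0 ≤ c := div_nonneg hσ hbase.le
  have hXae : AEMeasurable X P := hX.aemeasurable
  have hNM : ∀ z : ℝ, NullMeasurableSet {ω | X ω ≤ z} P := fun z =>
    hXae.nullMeasurable measurableSet_Iic
  set S := {z : ℝ | ε ≤ (P {ω | X ω ≤ z}).toReal} with hSdef
  -- S is bounded below
  have hBdd : BddBelow S := by
    obtain ⟨n, hn⟩ : ∃ n : ℕ, (P {ω | X ω ≤ -(n:ℝ)}).toReal < ε := by
      have hanti : Antitone (fun n : ℕ => {ω | X ω ≤ -(n:ℝ)}) := by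
        intro i j hij ω hω
        simp only [Set.mem_setOf_eq] at *
        have : -(j:ℝ) ≤ -(i:ℝ) := by exact_mod_cast neg_le_neg (Nat.cast_le.mpr hij)
        linarith
      have hlim := tendsto_measure_iInter_atTop (μ := P) (fun n => hNM _) hanti
        ⟨0, measure_ne_top _ _⟩
      have hempty : (⋂ n : ℕ, {ω | X ω ≤ -(n:ℝ)}) = ∅ := by
        ext ω
        simp only [Set.mem_iInter, Set.mem_setOf_eq, Set.mem_empty_iff_false, iff_false, not_forall]
        obtain ⟨n, hn⟩ := exists_nat_gt (-X ω)
        exact ⟨n, by push_neg; linarith⟩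
      rw [hempty, measure_empty] at hlim
      obtain ⟨n, hn⟩ := (hlim.eventually (gt_mem_nhds (ENNReal.ofReal_pos.mpr hε0))).exists
      exact ⟨n, ENNReal.toReal_lt_of_lt_ofReal hn⟩
    refine ⟨-(n:ℝ), fun z hz => ?_⟩
    by_contra h
    push_neg at h
    have hle : P {ω | X ω ≤ z} ≤ P {ω | X ω ≤ -(n:ℝ)} :=
      measure_mono fun ω hω => le_trans hω h.le
    have : (P {ω | X ω ≤ z}).toReal ≤ (P {ω | X ω ≤ -(n:ℝ)}).toReal :=
      ENNReal.toReal_mono (measure_ne_top _ _) hle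
    exact absurd hz (by simp only [hSdef, Set.mem_setOf_eq]; linarith)
  -- μ + c ∈ S
  have hmem : μ + c ∈ S := by
    simp only [hSdef, Set.mem_setOf_eq]
    rcases eq_or_lt_of_le hσ with hσ0 | hσpos
    · -- σm = 0 : X = μ a.e.
      have hzero : ∫ ω, |X ω - μ| ^ m ∂P = 0 := by rw [hmom, ← hσ0, Real.zero_rpow hm0.ne']
      have hae : (fun ω => |X ω - μ| ^ m) =ᵐ[P] 0 :=
        (integral_eq_zero_iff_of_nonneg (fun ω => Real.rpow_nonneg (abs_nonneg _) m)
          hmomInt).mp hzero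
      have hXμ : ∀ᵐ ω ∂P, X ω ≤ μ + c := by
        filter_upwards [hae] with ω hω
        have : |X ω - μ| = 0 := by
          by_contra habs
          have h1 : 0 < |X ω - μ| := lt_of_le_of_ne (abs_nonneg _) (Ne.symm habs)
          have := Real.rpow_pos_of_pos h1 m
          simp only [Pi.zero_apply] at hω
          linarith
        have : X ω = μ := by have := abs_eq_zero.mp this; linarith
        linarith
      have h1 : P {ω | X ω ≤ μ + c} = 1 := by
        have h2 : P {ω | ¬ X ω ≤ μ + c} = 0 := by
          rw [← ae_iff]; exact hXμ
        have h3 : (1:ℝ≥0∞) = P Set.univ := (measure_univ (μ := P)).symm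
        have h4 : P Set.univ ≤ P {ω | X ω ≤ μ + c} + P {ω | ¬ X ω ≤ μ + c} := by
          refine le_trans (measure_mono ?_) (measure_union_le _ _)
          intro ω _
          by_cases h : X ω ≤ μ + c
          · exact Or.inl h
          · exact Or.inr h
        rw [h2, add_zero] at h4
        exact le_antisymm prob_le_one (h3 ▸ h4)
      rw [h1]; simp; linarith
    · -- σm > 0 : Markov
      have hcpos : 0 < c := div_pos hσpos hbase
      have hcm : c ^ m = σm ^ m / (1 - ε) := by
        rw [hcdef, Real.div_rpow hσ hbase.le, ← Real.rpow_mul hε1'.le,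
          one_div_mul_cancel hm0.ne', Real.rpow_one]
      have hcmpos : 0 < c ^ m := Real.rpow_pos_of_pos hcpos m
      -- Markov
      have hmarkov := mul_meas_ge_le_integral_of_nonneg
        (f := fun ω => |X ω - μ| ^ m) (μ := P)
        (Filter.Eventually.of_forall fun ω => Real.rpow_nonneg (abs_nonneg _) m)
        hmomInt (c ^ m)
      rw [hmom] at hmarkov
      have hσm : (0:ℝ) < σm ^ m := Real.rpow_pos_of_pos hσpos m
      have hT : (P {ω | c ^ m ≤ |X ω - μ| ^ m}).toReal ≤ 1 - ε := by
        have h2 : (P {ω | c ^ m ≤ |X ω - μ| ^ m}).toReal ≤ σm ^ m / c ^ m :=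
          (le_div_iff₀' hcmpos).mpr hmarkov
        have h3 : σm ^ m / (σm ^ m / (1 - ε)) = 1 - ε := by
          field_simp
        rw [hcm, h3] at h2
        rw [hcm]
        exact h2
      -- {μ + c < X} ⊆ {c^m ≤ |X-μ|^m}
      have hsub : {ω | μ + c < X ω} ⊆ {ω | c ^ m ≤ |X ω - μ| ^ m} := by
        intro ω hω
        simp only [Set.mem_setOf_eq] at *
        have h1 : c ≤ |X ω - μ| := by
          rw [abs_of_nonneg (by linarith)]; linarith
        exact Real.rpow_le_rpow hc0 h1 hm0.le
      have hT2 : (P {ω | μ + c < X ω}).toReal ≤ 1 - ε :=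
        le_trans (ENNReal.toReal_mono (measure_ne_top _ _) (measure_mono hsub)) hT
      -- complement bound
      have hcover : (1:ℝ≥0∞) ≤ P {ω | X ω ≤ μ + c} + P {ω | μ + c < X ω} := by
        rw [← measure_univ (μ := P)]
        refine le_trans (measure_mono ?_) (measure_union_le _ _)
        intro ω _
        rcases le_or_gt (X ω) (μ + c) with h | h
        · exact Or.inl h
        · exact Or.inr h
      have hsum : (1:ℝ) ≤ (P {ω | X ω ≤ μ + c}).toReal + (P {ω | μ + c < X ω}).toReal := by
        have := ENNReal.toReal_mono (a := (1:ℝ≥0∞))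
          (ENNReal.add_ne_top.mpr ⟨measure_ne_top _ _, measure_ne_top _ _⟩) hcover
        rwa [ENNReal.toReal_one, ENNReal.toReal_add (measure_ne_top _ _) (measure_ne_top _ _)]
          at this
      linarith
  have hαle : α ≤ μ + c := by rw [hα]; exact csInf_le hBdd hmem
  -- P {X < α} ≤ ofReal ε
  set A := {ω | X ω < α} with hAdef
  have hPA : P A ≤ ENNReal.ofReal ε := by
    set s : ℕ → Set Ω := fun n => {ω | X ω ≤ α - 1 / (n + 1)} with hsdef
    have hmono : Monotone s := by
      intro i j hij ω hω
      simp only [hsdef, Set.mem_setOf_eq] at *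
      have h1 : (1:ℝ) / (j + 1) ≤ 1 / (i + 1) := by
        apply one_div_le_one_div_of_le
        · positivity
        · have hij' : (i:ℝ) ≤ (j:ℝ) := Nat.cast_le.mpr hij
          linarith
      linarith
    have hU : (⋃ n, s n) = A := by
      ext ω
      simp only [hsdef, hAdef, Set.mem_iUnion, Set.mem_setOf_eq]
      constructor
      · rintro ⟨n, hn⟩
        have : (0:ℝ) < 1 / (n + 1) := by positivity
        linarith
      · intro hω
        obtain ⟨n, hn⟩ := exists_nat_one_div_lt (show (0:ℝ) < α - X ω by linarith)
        exact ⟨n, by push_cast at hn ⊢; linarith⟩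
    have hlim := tendsto_measure_iUnion_atTop (μ := P) hmono
    rw [hU] at hlim
    refine le_of_tendsto hlim (Filter.Eventually.of_forall fun n => ?_)
    have hnotin : α - 1 / (n + 1) ∉ S := by
      intro hin
      have := csInf_le hBdd hin
      rw [← hα] at this
      have hpos : (0:ℝ) < 1 / ((n:ℝ) + 1) := by positivity
      linarith
    simp only [hSdef, Set.mem_setOf_eq, not_le] at hnotin
    exact (ENNReal.lt_ofReal_iff_toReal_lt (measure_ne_top _ _)).mpr hnotin |>.le
  have hPAr : (P A).toReal ≤ ε := ENNReal.toReal_le_of_le_ofReal hε0.le hPA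
  -- main Hölder chain
  have hm2 : (0:ℝ) < m - 2 := by linarith
  set Y : Ω → ℝ := fun ω => μ - X ω + c with hYdef
  have hYae : AEStronglyMeasurable Y P :=
    (aestronglyMeasurable_const.sub hX.1).add aestronglyMeasurable_const
  have hYm_meas : AEStronglyMeasurable (fun ω => ‖Y ω‖ ^ m) P :=
    (Real.continuous_rpow_const hm0.le).comp_aestronglyMeasurable hYae.norm
  have hYm_int : Integrable (fun ω => ‖Y ω‖ ^ m) P := by
    refine Integrable.mono' ((hmomInt.add (integrable_const (|c| ^ m))).const_mul (2 ^ m))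
      hYm_meas ?_
    refine Filter.Eventually.of_forall fun ω => ?_
    rw [Real.norm_of_nonneg (Real.rpow_nonneg (norm_nonneg _) m)]
    have h1 : ‖Y ω‖ ≤ |X ω - μ| + |c| := by
      rw [hYdef]; simp only [Real.norm_eq_abs]
      calc |μ - X ω + c| ≤ |μ - X ω| + |c| := abs_add_le _ _
        _ = |X ω - μ| + |c| := by rw [abs_sub_comm]
    calc ‖Y ω‖ ^ m ≤ (|X ω - μ| + |c|) ^ m :=
          Real.rpow_le_rpow (norm_nonneg _) h1 hm0.le
      _ ≤ 2 ^ m * (|X ω - μ| ^ m + |c| ^ m) :=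
          two_rpow_bound _ _ m (abs_nonneg _) (abs_nonneg _) hm0.le
  have hm_ne : ENNReal.ofReal m ≠ 0 := by
    simp only [ne_eq, ENNReal.ofReal_eq_zero, not_le]; linarith
  have hYMem : MemLp Y (ENNReal.ofReal m) P := by
    refine (memLp_norm_rpow_iff hYae hm_ne ENNReal.ofReal_ne_top).mp ?_
    rw [ENNReal.toReal_ofReal hm0.le, ENNReal.div_self hm_ne ENNReal.ofReal_ne_top]
    exact memLp_one_iff_integrable.mpr hYm_int
  have hf2 : MemLp (fun ω => ‖Y ω‖ ^ (2:ℝ)) (ENNReal.ofReal (m / 2)) P := by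
    have h := hYMem.norm_rpow_div (ENNReal.ofReal 2)
    rwa [ENNReal.toReal_ofReal (by norm_num : (0:ℝ) ≤ 2),
      ← ENNReal.ofReal_div_of_pos (by norm_num : (0:ℝ) < 2)] at h
  -- the indicator function
  have hANM : NullMeasurableSet A P := hXae.nullMeasurable measurableSet_Iio
  have hABae : MeasureTheory.toMeasurable P A =ᵐ[P] A := hANM.toMeasurable_ae_eq
  set g : Ω → ℝ := A.indicator (fun _ => (1:ℝ)) with hgdef
  have hg_eq : g =ᵐ[P] (MeasureTheory.toMeasurable P A).indicator (fun _ => (1:ℝ)) :=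
    indicator_ae_eq_of_ae_eq_set hABae.symm
  have hq_pos : 0 < m / (m - 2) := div_pos hm0 hm2
  have hgMem : MemLp g (ENNReal.ofReal (m / (m - 2))) P :=
    (memLp_congr_ae hg_eq).mpr ((memLp_const (1:ℝ)).indicator (measurableSet_toMeasurable _ _))
  have hpq : Real.HolderConjugate (m / 2) (m / (m - 2)) := by
    constructor
    · rw [inv_div, inv_div, inv_one]
      field_simp
      ring
    · linarith
    · exact hq_pos
  have hholder := integral_mul_le_Lp_mul_Lq_of_nonneg (μ := P) hpq
    (Filter.Eventually.of_forall fun ω => Real.rpow_nonneg (norm_nonneg _) 2)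
    (Filter.Eventually.of_forall fun ω => Set.indicator_nonneg (fun _ _ => zero_le_one) ω)
    hf2 hgMem
  -- integrability of the product
  have hInt2 : Integrable (fun ω => ‖Y ω‖ ^ (2:ℝ)) P := by
    have h2m : (2:ℝ≥0∞) ≤ ENNReal.ofReal m := by
      rw [show (2:ℝ≥0∞) = ENNReal.ofReal 2 by simp]
      exact ENNReal.ofReal_le_ofReal (by linarith)
    have h := (hYMem.mono_exponent h2m).integrable_norm_rpow two_ne_zero ENNReal.ofNat_ne_top
    simpa using h
  have hprod_int : Integrable (fun ω => ‖Y ω‖ ^ (2:ℝ) * g ω) P := by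
    refine hInt2.mono' (hf2.1.mul hgMem.1) (Filter.Eventually.of_forall fun ω => ?_)
    have hg01 : 0 ≤ g ω ∧ g ω ≤ 1 := by
      constructor
      · exact Set.indicator_nonneg (fun _ _ => zero_le_one) ω
      · exact Set.indicator_le_self' (fun _ _ => zero_le_one) ω |>.trans (by by_cases h : ω ∈ A <;> simp [hgdef, h])
    rw [Real.norm_of_nonneg (mul_nonneg (Real.rpow_nonneg (norm_nonneg _) 2) hg01.1)]
    exact mul_le_of_le_one_right (Real.rpow_nonneg (norm_nonneg _) 2) hg01.2
  -- step 1 : pointwise comparison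
  have hstep1 : ∫ ω, A.indicator (fun ω => (α - X ω) ^ 2) ω ∂P ≤
      ∫ ω, ‖Y ω‖ ^ (2:ℝ) * g ω ∂P := by
    refine integral_mono_of_nonneg
      (Filter.Eventually.of_forall fun ω => Set.indicator_nonneg (fun ω _ => sq_nonneg _) ω)
      hprod_int (Filter.Eventually.of_forall fun ω => ?_)
    by_cases h : ω ∈ A
    · simp only [hgdef, Set.indicator_of_mem h, mul_one]
      have hx : X ω < α := h
      have h2 : α - X ω ≤ ‖Y ω‖ := by
        rw [hYdef]; simp only [Real.norm_eq_abs]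
        refine le_trans ?_ (le_abs_self _)
        linarith
      calc (α - X ω) ^ 2 ≤ ‖Y ω‖ ^ 2 := by nlinarith [norm_nonneg (Y ω)]
        _ = ‖Y ω‖ ^ (2:ℝ) := by
            rw [← Real.rpow_natCast ‖Y ω‖ 2]; norm_num
    · simp only [hgdef, Set.indicator_of_notMem h, mul_zero]
      exact le_refl 0
  -- rewrite Hölder's RHS
  have he1 : ∫ ω, (‖Y ω‖ ^ (2:ℝ)) ^ (m / 2) ∂P = ∫ ω, |μ - X ω + c| ^ m ∂P := by
    refine integral_congr_ae (Filter.Eventually.of_forall fun ω => ?_)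
    show (‖Y ω‖ ^ (2:ℝ)) ^ (m / 2) = |μ - X ω + c| ^ m
    rw [← Real.rpow_mul (norm_nonneg _)]
    have : (2:ℝ) * (m / 2) = m := by ring
    rw [this, hYdef, Real.norm_eq_abs]
  have he2 : ∫ ω, g ω ^ (m / (m - 2)) ∂P = (P A).toReal := by
    have h1 : (fun ω => g ω ^ (m / (m - 2))) = g := by
      funext ω
      by_cases h : ω ∈ A
      · simp [hgdef, Set.indicator_of_mem h]
      · simp [hgdef, Set.indicator_of_notMem h, Real.zero_rpow hq_pos.ne']
    rw [h1, integral_congr_ae hg_eq,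
      integral_indicator_const (1:ℝ) (measurableSet_toMeasurable _ _), smul_eq_mul, mul_one,
      measureReal_def, measure_congr hABae]
  have hq2 : 1 / (m / 2) = 2 / m := one_div_div _ _
  have hq3 : 1 / (m / (m - 2)) = 1 - 2 / m := by
    rw [one_div_div]
    field_simp
  rw [he1, he2, hq2, hq3] at hholder
  refine le_trans hstep1 (le_trans hholder ?_)
  have hmono2 : ((P A).toReal) ^ (1 - 2/m) ≤ ε ^ (1 - 2/m) := by
    apply Real.rpow_le_rpow ENNReal.toReal_nonneg hPAr
    have : 2 / m < 1 := by
      rw [div_lt_one hm0]; linarith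
    linarith
  have hfirst : 0 ≤ (∫ ω, |μ - X ω + c| ^ m ∂P) ^ (2 / m) :=
    Real.rpow_nonneg (integral_nonneg fun ω => Real.rpow_nonneg (abs_nonneg _) m) _
  exact mul_le_mul_of_nonneg_left hmono2 hfirst
end
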